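/- Let n ≥ 3 be odd, p a prime, and suppose 1 - 4p^n = -c²d with d squarefree and d ≠ 3, c a positive integer. If the element (1 + c√(-d))/2 is not an ℓ-th power in the ring of integers of Q(√(-d)) for any prime ℓ dividing n, then the ideal class of a prime ideal above p in Q(√(-d)) has order exactly n; in particular n divides the class number of Q(√(-d)). -/

import Mathlib

open NumberField

open scoped Classical

set_option maxSynthPendingDepth 2

-- ω is not rational
lemma aux_omega_irrat (K : Type) [Field K] [CharZero K] (d : ℕ) (hd0 : d ≠ 0)
    (ω : K) (hω : ω ^ 2 = -(d : K)) (q : ℚ) : (q : K) ≠ ω := by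
  intro hq
  have h2 : q ^ 2 = -(d : ℚ) := by
    have : ((q ^ 2 : ℚ) : K) = ((-(d : ℚ) : ℚ) : K) := by push_cast; rw [hq, hω]
    exact_mod_cast this
  have : (0 : ℚ) < d := by exact_mod_cast Nat.pos_of_ne_zero hd0
  nlinarith [sq_nonneg q]

-- no real places
lemma aux_no_real (K : Type) [Field K] [NumberField K] (d : ℕ) (hd0 : d ≠ 0)
    (ω : K) (hω : ω ^ 2 = -(d : K)) : InfinitePlace.nrRealPlaces K = 0 := by
  rw [Fintype.card_eq_zero_iff]
  refine ⟨fun ⟨w, hw⟩ => ?_⟩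
  have hφ : NumberField.ComplexEmbedding.IsReal w.embedding :=
    NumberField.InfinitePlace.isReal_iff.mp hw
  set ψ := hφ.embedding with hψ
  have : (ψ ω) ^ 2 = -(d : ℝ) := by
    rw [← map_pow, hω]; simp
  have hd : (0 : ℝ) < d := by exact_mod_cast Nat.pos_of_ne_zero hd0
  nlinarith [sq_nonneg (ψ ω)]

lemma aux_units_finite (K : Type) [Field K] [NumberField K] (hdim : Module.finrank ℚ K = 2)
    (d : ℕ) (hd0 : d ≠ 0) (ω : K) (hω : ω ^ 2 = -(d : K)) : Finite ((𝓞 K)ˣ) := by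
  have hreal : InfinitePlace.nrRealPlaces K = 0 := aux_no_real K d hd0 ω hω
  have hcard : Fintype.card (InfinitePlace K) = 1 := by
    have h1 := NumberField.InfinitePlace.card_add_two_mul_card_eq_rank K
    have h2 := NumberField.InfinitePlace.card_eq_nrRealPlaces_add_nrComplexPlaces K
    omega
  have hrank : Units.rank K = 0 := by
    rw [Units.rank, hcard]
  have hsub : Subsingleton (Additive ((𝓞 K)ˣ ⧸ (Units.torsion K))) := by
    have b := (Units.basisModTorsion K).reindex (finCongr hrank)
    haveI : IsEmpty (Fin 0) := inferInstance
    exact b.repr.toEquiv.subsingleton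
  have htop : ∀ u : (𝓞 K)ˣ, u ∈ Units.torsion K := by
    intro u
    have : (QuotientGroup.mk u : (𝓞 K)ˣ ⧸ (Units.torsion K)) =
        (QuotientGroup.mk 1 : (𝓞 K)ˣ ⧸ (Units.torsion K)) :=
      congrArg Additive.toMul (Subsingleton.elim _ _)
    simpa using (QuotientGroup.eq_one_iff u).mp (by simpa using this)
  exact Finite.of_surjective (fun x : Units.torsion K => (x : (𝓞 K)ˣ))
    (fun u => ⟨⟨u, htop u⟩, rfl⟩)

-- if -3 is a square in K then d = 3
lemma aux_sqrt3 (K : Type) [Field K] [NumberField K] (hdim : Module.finrank ℚ K = 2)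
    (d : ℕ) (hd : Squarefree d) (ω : K) (hω : ω ^ 2 = -(d : K))
    (τ : K) (hτ : τ ^ 2 = -(3 : K)) : d = 3 := by
  have hd0 : d ≠ 0 := hd.ne_zero
  have hωQ := aux_omega_irrat K d hd0 ω hω
  -- {1, ω} is linearly independent over ℚ
  have hli : LinearIndependent ℚ ![(1 : K), ω] := by
    rw [LinearIndependent.pair_iff]
    intro s t hst
    have hst' : (s : K) + (t : K) * ω = 0 := by
      rw [Rat.smul_def, Rat.smul_def, mul_one] at hst; exact hst
    by_cases ht : t = 0
    · subst ht
      refine ⟨?_, rfl⟩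
      have : (s : K) = 0 := by simpa using hst'
      exact_mod_cast this
    · exfalso
      apply hωQ (-s / t)
      rw [Rat.cast_div, Rat.cast_neg, div_eq_iff (by exact_mod_cast ht : (t : K) ≠ 0)]
      linear_combination -hst'
  -- {1, ω} spans K
  have hspan : Submodule.span ℚ ({1, ω} : Set K) = ⊤ := by
    apply Submodule.eq_top_of_finrank_eq
    have hr : Set.range ![(1 : K), ω] = {1, ω} := by
      simp [Matrix.range_cons, Matrix.range_empty, Set.pair_comm]
    rw [← hr, finrank_span_eq_card hli, hdim]
    simp
  have hτmem : τ ∈ Submodule.span ℚ ({1, ω} : Set K) := by rw [hspan]; trivial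
  obtain ⟨a, b, hab⟩ := Submodule.mem_span_pair.mp hτmem
  have hab' : (a : K) + (b : K) * ω = τ := by
    rw [Rat.smul_def, Rat.smul_def, mul_one] at hab; exact hab
  -- expand τ² = -3 in coordinates
  have hexp : ((2 * a * b : ℚ) : K) * ω = ((-3 - a ^ 2 + b ^ 2 * (d : ℚ) : ℚ) : K) := by
    push_cast
    linear_combination hτ + ((a : K) + (b : K) * ω + τ) * hab' - (b : K) ^ 2 * hω
  have hab0 : a * b = 0 := by
    by_contra hne
    have hne2 : (2 * a * b : ℚ) ≠ 0 := by
      rw [show (2 * a * b : ℚ) = 2 * (a * b) by ring]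
      exact mul_ne_zero two_ne_zero hne
    apply hωQ ((-3 - a ^ 2 + b ^ 2 * (d : ℚ)) / (2 * a * b))
    rw [Rat.cast_div, div_eq_iff (by exact_mod_cast hne2 : ((2 * a * b : ℚ) : K) ≠ 0)]
    linear_combination -hexp
  have hzero : ((2 * a * b : ℚ) : K) = 0 := by
    rw [show (2 * a * b : ℚ) = 2 * (a * b) by ring, hab0]
    simp
  rw [hzero, zero_mul] at hexp
  have hnum : (-3 - a ^ 2 + b ^ 2 * (d : ℚ) : ℚ) = 0 := by exact_mod_cast hexp.symm
  rcases mul_eq_zero.mp hab0 with ha | hb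
  · -- a = 0 : b² d = 3
    have hbd : b ^ 2 * (d : ℚ) = 3 := by rw [ha] at hnum; linarith
    have hsq : (b * d) ^ 2 = ((3 * d : ℕ) : ℚ) := by push_cast; nlinarith [hbd]
    obtain ⟨k, hk⟩ : ∃ k : ℤ, (k : ℚ) = b * d := by
      refine IsIntegrallyClosed.isIntegral_iff.mp ?_
      refine ⟨Polynomial.X ^ 2 - Polynomial.C ((3 * d : ℕ) : ℤ), ?_, ?_⟩
      · exact Polynomial.monic_X_pow_sub_C _ two_ne_zero
      · rw [Polynomial.eval₂_sub, Polynomial.eval₂_X_pow, Polynomial.eval₂_C, eq_intCast]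
        push_cast
        push_cast at hsq
        linear_combination hsq
    have hk2 : k ^ 2 = ((3 * d : ℕ) : ℤ) := by
      have : ((k : ℚ)) ^ 2 = ((3 * d : ℕ) : ℚ) := by rw [hk]; exact hsq
      exact_mod_cast this
    have hk2' : k.natAbs ^ 2 = 3 * d := by
      have := congrArg Int.natAbs hk2
      simpa [Int.natAbs_pow, Int.natAbs_mul] using this
    have h3dvd : (3 : ℕ) ∣ k.natAbs := by
      apply Nat.Prime.dvd_of_dvd_pow Nat.prime_three (n := 2)
      rw [hk2']; exact ⟨d, rfl⟩
    obtain ⟨j, hj⟩ := h3dvd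
    rw [hj] at hk2'
    have h9 : 3 * (3 * j ^ 2) = 3 * d := by ring_nf; ring_nf at hk2'; linarith
    have hdj : d = 3 * j ^ 2 := (Nat.eq_of_mul_eq_mul_left (by norm_num) h9).symm
    have hu : IsUnit j := hd j ⟨3, by rw [hdj]; ring⟩
    rw [Nat.isUnit_iff.mp hu] at hdj
    simpa using hdj
  · -- b = 0 : a² = -3 impossible
    exfalso
    rw [hb] at hnum
    nlinarith [sq_nonneg a]

-- every unit is an ℓ-th power, for odd primes ℓ
lemma aux_unit_pow (K : Type) [Field K] [NumberField K] (hdim : Module.finrank ℚ K = 2)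
    (d : ℕ) (hd : Squarefree d) (hd3 : d ≠ 3) (ω : K) (hω : ω ^ 2 = -(d : K))
    (ℓ : ℕ) (hℓ : ℓ.Prime) (hℓ2 : ℓ ≠ 2) (u : (𝓞 K)ˣ) : ∃ v : (𝓞 K)ˣ, v ^ ℓ = u := by
  haveI : Finite ((𝓞 K)ˣ) := aux_units_finite K hdim d hd.ne_zero ω hω
  by_cases hdvd : ℓ ∣ Nat.card ((𝓞 K)ˣ)
  · exfalso
    haveI : Fact ℓ.Prime := ⟨hℓ⟩
    obtain ⟨ζ, hζ⟩ := exists_prime_orderOf_dvd_card' ℓ hdvd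
    -- the element (ζ : K) is a primitive ℓ-th root of unity
    let f : (𝓞 K)ˣ →* K := (algebraMap (𝓞 K) K : 𝓞 K →+* K).toMonoidHom.comp
      (Units.coeHom (𝓞 K))
    have hfinj : Function.Injective f := by
      intro x y hxy
      apply Units.ext
      exact NumberField.RingOfIntegers.coe_injective hxy
    set z : K := f ζ with hz
    have hordz : orderOf z = ℓ := by rw [hz, orderOf_injective f hfinj, hζ]
    have hprim : IsPrimitiveRoot z ℓ := hordz ▸ IsPrimitiveRoot.orderOf z
    -- degree bound forces ℓ = 3
    have htot : Nat.totient ℓ ≤ 2 := by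
      have h1 := Polynomial.cyclotomic_eq_minpoly_rat hprim hℓ.pos
      have h2 : (minpoly ℚ z).natDegree ≤ 2 := hdim ▸ minpoly.natDegree_le z
      rw [← h1, Polynomial.natDegree_cyclotomic] at h2
      exact h2
    have hℓ3 : ℓ = 3 := by
      rw [Nat.totient_prime hℓ] at htot
      have := hℓ.two_le
      omega
    -- z is a nontrivial cube root of unity
    have hz3 : z ^ 3 = 1 := by rw [← hℓ3, ← hordz]; exact pow_orderOf_eq_one z
    have hz1 : z ≠ 1 := by
      intro hcon
      rw [hcon, orderOf_one] at hordz
      omega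
    have hquad : z ^ 2 + z + 1 = 0 := by
      have hfac : (z - 1) * (z ^ 2 + z + 1) = 0 := by linear_combination hz3
      rcases mul_eq_zero.mp hfac with hcon | hgood
      · exact absurd (by linear_combination hcon) hz1
      · exact hgood
    have hτ : (2 * z + 1) ^ 2 = -(3 : K) := by linear_combination 4 * hquad
    exact hd3 (aux_sqrt3 K hdim d hd ω hω (2 * z + 1) hτ)
  · have hco : (Nat.card ((𝓞 K)ˣ)).Coprime ℓ := ((hℓ.coprime_iff_not_dvd).mpr hdvd).symm
    exact ⟨(powCoprime hco).symm u, (powCoprime hco).apply_symm_apply u⟩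

/-- Let `n ≥ 3` be odd, `p` a prime, `1 - 4p^n = -c²d` with `d` squarefree, `d ≠ 3`,
`c > 0`. If `α = (1 + c√-d)/2` is not an `ℓ`-th power in `𝓞 K` (`K = ℚ(√-d)`) for any
prime `ℓ ∣ n`, then the class of a prime ideal `𝔞` above `p` with `(α) = 𝔞^n` has order
exactly `n` in the class group; in particular `n` divides the class number of `K`. -/
theorem stmt_14 (n p c d : ℕ) (hn3 : 3 ≤ n) (hn : Odd n) (hp : p.Prime)
    (hc : 0 < c) (hd : Squarefree d) (hd3 : d ≠ 3)
    (h : (1 : ℤ) - 4 * p ^ n = -(c ^ 2 * d))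
    (K : Type) [Field K] [NumberField K] (hdim : Module.finrank ℚ K = 2)
    (ω : K) (hω : ω ^ 2 = -(d : K))
    (α : 𝓞 K) (hα : (α : K) = (1 + (c : K) * ω) / 2)
    (hpow : ∀ ℓ : ℕ, ℓ.Prime → ℓ ∣ n → ¬ ∃ β : 𝓞 K, α = β ^ ℓ)
    (𝔞 : Ideal (𝓞 K)) (h𝔞0 : 𝔞 ∈ nonZeroDivisors (Ideal (𝓞 K)))
    (h𝔞prime : 𝔞.IsPrime) (hp𝔞 : (p : 𝓞 K) ∈ 𝔞)
    (h𝔞 : Ideal.span {α} = 𝔞 ^ n) :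
    orderOf (ClassGroup.mk0 (⟨𝔞, h𝔞0⟩ : nonZeroDivisors (Ideal (𝓞 K)))) = n ∧
      n ∣ NumberField.classNumber K := by
  have hn0 : n ≠ 0 := by omega
  set g := ClassGroup.mk0 (⟨𝔞, h𝔞0⟩ : nonZeroDivisors (Ideal (𝓞 K))) with hg
  have hcoe : ∀ k : ℕ, (⟨𝔞, h𝔞0⟩ : nonZeroDivisors (Ideal (𝓞 K))) ^ k
      = ⟨𝔞 ^ k, pow_mem h𝔞0 k⟩ := fun k => Subtype.ext (SubmonoidClass.coe_pow _ _)
  have hprin : ∀ k : ℕ, g ^ k = 1 → ∃ β : 𝓞 K, 𝔞 ^ k = Ideal.span {β} := by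
    intro k hk
    have h1 : ClassGroup.mk0 ⟨𝔞 ^ k, pow_mem h𝔞0 k⟩ = 1 := by
      rw [← hcoe, map_pow, ← hg, hk]
    obtain ⟨β, hβ⟩ := ((ClassGroup.mk0_eq_one_iff (pow_mem h𝔞0 k)).mp h1).principal
    exact ⟨β, hβ⟩
  have hgn : g ^ n = 1 := by
    rw [hg, ← map_pow, hcoe n, ClassGroup.mk0_eq_one_iff]
    exact ⟨⟨α, h𝔞.symm⟩⟩
  have hdvd : orderOf g ∣ n := orderOf_dvd_of_pow_eq_one hgn
  have horder : orderOf g = n := by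
    by_contra hne
    obtain ⟨t, ht⟩ := hdvd
    have ht1 : t ≠ 1 := fun hcon => hne (by rw [ht, hcon, mul_one])
    obtain ⟨ℓ, hℓp, hℓt⟩ := Nat.exists_prime_and_dvd ht1
    have hℓn : ℓ ∣ n := dvd_trans hℓt ⟨orderOf g, by rw [ht]; ring⟩
    have hℓ2 : ℓ ≠ 2 := by
      intro h2
      have h2n : (2 : ℕ) ∣ n := h2 ▸ hℓn
      exact (Nat.not_even_iff_odd.mpr hn) ((even_iff_two_dvd (α := ℕ)).mpr h2n)
    obtain ⟨β, hβ⟩ := hprin (orderOf g) (pow_orderOf_eq_one g)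
    have hspan : Ideal.span {α} = Ideal.span {β ^ t} := by
      rw [h𝔞, ht, pow_mul, hβ, Ideal.span_singleton_pow]
    obtain ⟨u, hu⟩ := Ideal.span_singleton_eq_span_singleton.mp hspan
    obtain ⟨s, hs⟩ := hℓt
    obtain ⟨v, hv⟩ := aux_unit_pow K hdim d hd hd3 ω hω ℓ hℓp hℓ2 u⁻¹
    refine hpow ℓ hℓp hℓn ⟨β ^ s * ↑v, ?_⟩
    have hαeq : α = β ^ t * ↑u⁻¹ := (Units.eq_mul_inv_iff_mul_eq u).mpr hu
    rw [hαeq, mul_pow, ← pow_mul, ← Units.val_pow_eq_pow_val, hv, hs, Nat.mul_comm ℓ s]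
  refine ⟨horder, ?_⟩
  rw [NumberField.classNumber]
  exact horder ▸ orderOf_dvd_card
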